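/- Let H be a complex Hilbert space, let T : H →L[ℂ] H be a bounded self-adjoint positive operator, let A : H →L[ℂ] H be any bounded operator, let τ ≥ 0, and let φ, ψ ∈ H be eigenvectors of T: T φ = λ·φ and T ψ = μ·ψ with λ, μ > 0. Then for every s > 0 the operator T + (τ+s)·I is invertible with (T + (τ+s)·I)⁻¹ φ = (λ+τ+s)⁻¹ φ and (T + (τ+s)·I)⁻¹ ψ = (μ+τ+s)⁻¹ ψ; the function s ↦ ⟪A((T+(τ+s)·I)⁻¹ φ), (T+(τ+s)·I)⁻¹ ψ⟫ is integrable on (0,∞); and ∫₀^∞ ⟪A((T+(τ+s)·I)⁻¹ φ), (T+(τ+s)·I)⁻¹ ψ⟫ ds = c · ⟪A φ, ψ⟫, where c = (log(λ+τ) − log(μ+τ))/(λ − μ) if λ ≠ μ and c = 1/(λ+τ) if λ = μ. -/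

import Mathlib

open MeasureTheory


-- coercive selfadjoint operator is a unit
lemma coercive_isUnit {H : Type*} [NormedAddCommGroup H] [InnerProductSpace ℂ H]
    [CompleteSpace H] (B : H →L[ℂ] H) (c : ℝ) (hc : 0 < c)
    (hlow : ∀ f : H, c * ‖f‖ ^ 2 ≤ (inner ℂ (B f) f : ℂ).re) : IsUnit B := by
  have hbdd : ∀ f : H, ‖f‖ ≤ c⁻¹ * ‖B f‖ := by
    intro f
    rcases eq_or_ne f 0 with rfl | hf
    · simp
    have h1 : c * ‖f‖ ^ 2 ≤ ‖B f‖ * ‖f‖ := by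
      calc c * ‖f‖ ^ 2 ≤ (inner ℂ (B f) f : ℂ).re := hlow f
        _ ≤ ‖(inner ℂ (B f) f : ℂ)‖ := Complex.re_le_norm _
        _ ≤ ‖B f‖ * ‖f‖ := norm_inner_le_norm _ _
    have hfpos : 0 < ‖f‖ := norm_pos_iff.mpr hf
    rw [inv_mul_eq_div, le_div_iff₀ hc]
    nlinarith [h1, hfpos]
  have hanti : AntilipschitzWith ⟨c⁻¹, by positivity⟩ B :=
    B.antilipschitz_of_bound (by exact_mod_cast hbdd)
  have hinj : Function.Injective B := hanti.injective
  rw [ContinuousLinearMap.isUnit_iff_bijective]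
  refine ⟨hinj, ?_⟩
  -- range is closed
  have hclosed : IsClosed ((LinearMap.range (B : H →ₗ[ℂ] H) : Submodule ℂ H) : Set H) :=
    by rw [LinearMap.coe_range]; exact hanti.isClosed_range B.uniformContinuous
  have : CompleteSpace (LinearMap.range (B : H →ₗ[ℂ] H)) := hclosed.completeSpace_coe
  have hrange : LinearMap.range (B : H →ₗ[ℂ] H) = ⊤ := by
    rw [← Submodule.orthogonal_eq_bot_iff]
    rw [Submodule.eq_bot_iff]
    intro y hy
    have h0 : (inner ℂ (B y) y : ℂ) = 0 := by
      have := (Submodule.mem_orthogonal _ y).mp hy (B y) (LinearMap.mem_range_self _ y)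
      exact this
    have := hlow y
    rw [h0] at this
    simp only [Complex.zero_re] at this
    have : ‖y‖ ^ 2 ≤ 0 := by nlinarith
    have : ‖y‖ = 0 := by nlinarith [sq_nonneg ‖y‖, norm_nonneg y]
    simpa using this
  intro y
  exact (LinearMap.range_eq_top.mp hrange) y

lemma aux_integral (a b : ℝ) (ha : 0 < a) (hb : 0 < b) :
    IntegrableOn (fun s : ℝ => (a + s)⁻¹ * (b + s)⁻¹) (Set.Ioi 0) ∧
    ∫ s in Set.Ioi (0 : ℝ), (a + s)⁻¹ * (b + s)⁻¹ =
      if a = b then 1 / a else (Real.log a - Real.log b) / (a - b) := by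
  by_cases h : a = b
  · subst h
    simp only [if_pos rfl]
    set g : ℝ → ℝ := fun s => -(a + s)⁻¹ with hg
    have hderiv : ∀ x ∈ Set.Ici (0:ℝ), HasDerivAt g ((a + x)⁻¹ * (a + x)⁻¹) x := by
      intro x hx
      have hax : (0:ℝ) < a + x := by simp at hx; linarith
      have h1 : HasDerivAt (fun s : ℝ => a + s) 1 x := (hasDerivAt_id x).const_add a
      have h2 := (h1.inv hax.ne').neg
      convert h2 using 1
      · rfl
      · rfl
      · rfl
      field_simp
    have hpos : ∀ x ∈ Set.Ioi (0:ℝ), 0 ≤ (a + x)⁻¹ * (a + x)⁻¹ := by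
      intro x hx; simp at hx; positivity
    have htend : Filter.Tendsto g Filter.atTop (nhds 0) := by
      have : Filter.Tendsto (fun s : ℝ => (a + s)⁻¹) Filter.atTop (nhds 0) :=
        (Filter.tendsto_atTop_add_const_left _ a Filter.tendsto_id).inv_tendsto_atTop
      simpa [hg] using this.neg
    refine ⟨integrableOn_Ioi_deriv_of_nonneg' hderiv hpos htend, ?_⟩
    rw [integral_Ioi_of_hasDerivAt_of_nonneg' hderiv hpos htend]
    simp [hg, one_div]
  · have hab : a - b ≠ 0 := sub_ne_zero.mpr h
    set g : ℝ → ℝ := fun s => (Real.log (b + s) - Real.log (a + s)) / (a - b) with hg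
    have hderiv : ∀ x ∈ Set.Ici (0:ℝ), HasDerivAt g ((a + x)⁻¹ * (b + x)⁻¹) x := by
      intro x hx
      have hx0 : (0:ℝ) ≤ x := hx
      have hax : (0:ℝ) < a + x := by linarith
      have hbx : (0:ℝ) < b + x := by linarith
      have h1 : HasDerivAt (fun s : ℝ => Real.log (a + s)) (1 / (a + x))  x :=
        ((hasDerivAt_id x).const_add a).log hax.ne'
      have h2 : HasDerivAt (fun s : ℝ => Real.log (b + s)) (1 / (b + x)) x :=
        ((hasDerivAt_id x).const_add b).log hbx.ne'
      have h3 := (h2.sub h1).div_const (a - b)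
      convert h3 using 1
      · rfl
      · rfl
      · rfl
      field_simp
      ring
    have hpos : ∀ x ∈ Set.Ioi (0:ℝ), 0 ≤ (a + x)⁻¹ * (b + x)⁻¹ := by
      intro x hx; simp at hx; positivity
    have htend : Filter.Tendsto g Filter.atTop (nhds 0) := by
      have hr : Filter.Tendsto (fun s : ℝ => (b + s) / (a + s)) Filter.atTop (nhds 1) := by
        have h0 : Filter.Tendsto (fun s : ℝ => 1 + (b - a) / (a + s)) Filter.atTop (nhds 1) := by
          have : Filter.Tendsto (fun s : ℝ => (b - a) * (a + s)⁻¹) Filter.atTop (nhds 0) := by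
            simpa using ((Filter.tendsto_atTop_add_const_left _ a
              Filter.tendsto_id).inv_tendsto_atTop).const_mul (b - a)
          simpa [div_eq_mul_inv] using this.const_add 1
        apply h0.congr'
        filter_upwards [Filter.eventually_gt_atTop (0:ℝ)] with s hs
        have hax : (0:ℝ) < a + s := by linarith
        field_simp
        ring
      have hlog : Filter.Tendsto (fun s : ℝ => Real.log ((b + s) / (a + s)))
          Filter.atTop (nhds 0) := by
        have := (Real.continuousAt_log one_ne_zero).tendsto.comp hr
        rw [Real.log_one] at this
        exact this
      have := hlog.div_const (a - b)
      rw [zero_div] at this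
      apply this.congr'
      filter_upwards [Filter.eventually_gt_atTop (0:ℝ)] with s hs
      have hax : (0:ℝ) < a + s := by linarith
      have hbx : (0:ℝ) < b + s := by linarith
      rw [hg]
      rw [Real.log_div hbx.ne' hax.ne']
    refine ⟨integrableOn_Ioi_deriv_of_nonneg' hderiv hpos htend, ?_⟩
    rw [integral_Ioi_of_hasDerivAt_of_nonneg' hderiv hpos htend]
    simp only [if_neg h, hg]
    rw [zero_sub, add_zero, add_zero]
    ring

lemma inverse_eigen {H : Type*} [NormedAddCommGroup H] [InnerProductSpace ℂ H]
    [CompleteSpace H] (B : H →L[ℂ] H) (hu : IsUnit B) (r : ℝ) (hr : r ≠ 0) (x : H)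
    (hx : B x = r • x) : Ring.inverse B x = r⁻¹ • x := by
  have h1 : B (r⁻¹ • x) = x := by
    rw [ContinuousLinearMap.map_smul_of_tower, hx, smul_smul, inv_mul_cancel₀ hr, one_smul]
  calc Ring.inverse B x = Ring.inverse B (B (r⁻¹ • x)) := by rw [h1]
    _ = (Ring.inverse B * B) (r⁻¹ • x) := by rw [ContinuousLinearMap.mul_apply]
    _ = r⁻¹ • x := by rw [Ring.inverse_mul_cancel _ hu, ContinuousLinearMap.one_apply]


/-- Let `T` be a bounded self-adjoint positive operator on a complex Hilbert space, `A` any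
bounded operator, `τ ≥ 0`, and `φ, ψ` eigenvectors of `T` with eigenvalues `λ, μ > 0`.
Then for every `s > 0` the operator `T + (τ+s) • 1` is invertible, its inverse maps `φ` to
`(λ+τ+s)⁻¹ • φ` and `ψ` to `(μ+τ+s)⁻¹ • ψ`, the function
`s ↦ ⟪A((T+(τ+s)•1)⁻¹ φ), (T+(τ+s)•1)⁻¹ ψ⟫` is integrable on `(0,∞)`, and its integral equals
`c • ⟪A φ, ψ⟫` with `c = (log(λ+τ) − log(μ+τ))/(λ − μ)` if `λ ≠ μ` and `c = 1/(λ+τ)` else. -/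
theorem integral_inner_resolvent_eigenvectors {H : Type*} [NormedAddCommGroup H]
    [InnerProductSpace ℂ H] [CompleteSpace H] (T A : H →L[ℂ] H) (τ lam mu : ℝ) (φ ψ : H)
    (hT : IsSelfAdjoint T) (hpos : ∀ f : H, 0 ≤ (inner ℂ (T f) f : ℂ).re)
    (hτ : 0 ≤ τ) (hlam : 0 < lam) (hmu : 0 < mu)
    (hφ : T φ = lam • φ) (hψ : T ψ = mu • ψ) :
    (∀ s : ℝ, 0 < s →
      IsUnit (T + (τ + s) • (1 : H →L[ℂ] H)) ∧
      Ring.inverse (T + (τ + s) • (1 : H →L[ℂ] H)) φ = (lam + τ + s)⁻¹ • φ ∧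
      Ring.inverse (T + (τ + s) • (1 : H →L[ℂ] H)) ψ = (mu + τ + s)⁻¹ • ψ) ∧
    IntegrableOn
      (fun s : ℝ => (inner ℂ (A (Ring.inverse (T + (τ + s) • (1 : H →L[ℂ] H)) φ))
        (Ring.inverse (T + (τ + s) • (1 : H →L[ℂ] H)) ψ) : ℂ))
      (Set.Ioi 0) ∧
    ∫ s in Set.Ioi (0 : ℝ),
        (inner ℂ (A (Ring.inverse (T + (τ + s) • (1 : H →L[ℂ] H)) φ))
          (Ring.inverse (T + (τ + s) • (1 : H →L[ℂ] H)) ψ) : ℂ)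
      = (if lam = mu then 1 / (lam + τ)
          else (Real.log (lam + τ) - Real.log (mu + τ)) / (lam - mu)) • (inner ℂ (A φ) ψ : ℂ) := by
  have hmain : ∀ s : ℝ, 0 < s →
      IsUnit (T + (τ + s) • (1 : H →L[ℂ] H)) ∧
      Ring.inverse (T + (τ + s) • (1 : H →L[ℂ] H)) φ = (lam + τ + s)⁻¹ • φ ∧
      Ring.inverse (T + (τ + s) • (1 : H →L[ℂ] H)) ψ = (mu + τ + s)⁻¹ • ψ := by
    intro s hs
    set B := T + (τ + s) • (1 : H →L[ℂ] H) with hB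
    have hts : (0:ℝ) < τ + s := by linarith
    have hBf : ∀ f : H, B f = T f + (τ + s) • f := by
      intro f; simp [hB]
    have hlow : ∀ f : H, (τ + s) * ‖f‖ ^ 2 ≤ (inner ℂ (B f) f : ℂ).re := by
      intro f
      rw [hBf, inner_add_left, RCLike.real_smul_eq_coe_smul (K := ℂ),
        inner_smul_real_left, Complex.add_re, Complex.smul_re]
      have hn : (inner ℂ f f : ℂ).re = ‖f‖ ^ 2 := by
        rw [inner_self_eq_norm_sq_to_K (𝕜 := ℂ) f]; norm_cast
      rw [hn, smul_eq_mul]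
      have := hpos f
      linarith
    have hu : IsUnit B := coercive_isUnit B (τ + s) hts hlow
    have hφ' : B φ = (lam + τ + s) • φ := by
      rw [hBf, hφ, ← add_smul, ← add_assoc]
    have hψ' : B ψ = (mu + τ + s) • ψ := by
      rw [hBf, hψ, ← add_smul, ← add_assoc]
    exact ⟨hu, inverse_eigen B hu _ (by linarith) φ hφ',
      inverse_eigen B hu _ (by linarith) ψ hψ'⟩
  set c : ℂ := inner ℂ (A φ) ψ with hc
  have key : Set.EqOn
      (fun s : ℝ => (((lam + τ + s)⁻¹ * (mu + τ + s)⁻¹ : ℝ)) • c)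
      (fun s : ℝ => (inner ℂ (A (Ring.inverse (T + (τ + s) • (1 : H →L[ℂ] H)) φ))
        (Ring.inverse (T + (τ + s) • (1 : H →L[ℂ] H)) ψ) : ℂ))
      (Set.Ioi 0) := by
    intro s hs
    obtain ⟨hu, h2, h3⟩ := hmain s hs
    have coe_smul : ∀ (r : ℝ) (x : H), r • x = ((r : ℂ)) • x := by
      intro r x; rw [← algebraMap_smul ℂ r x, Complex.coe_algebraMap]
    simp only
    rw [h2, h3, ContinuousLinearMap.map_smul_of_tower,
      coe_smul ((lam + τ + s)⁻¹), coe_smul ((mu + τ + s)⁻¹),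
      inner_smul_left, inner_smul_right, Complex.conj_ofReal, ← hc, Complex.real_smul]
    push_cast
    ring
  have haux := aux_integral (lam + τ) (mu + τ) (by linarith) (by linarith)
  refine ⟨hmain, ?_, ?_⟩
  · exact MeasureTheory.IntegrableOn.congr_fun (haux.1.smul_const c) key measurableSet_Ioi
  · rw [← setIntegral_congr_fun measurableSet_Ioi key, integral_smul_const, haux.2]
    congr 1
    by_cases hlm : lam = mu
    · simp [hlm]
    · rw [if_neg (by intro h; exact hlm (by linarith)), if_neg hlm,
        add_sub_add_right_eq_sub]
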